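/- Let 0 < s < 1, K > 1, and let x, y > 0 be real numbers with |x − y| < x/K. Then |x^s − y^s| ≤ (s/(K−1)^{1−s}) · |x − y|^s. Moreover, if K > 1 + s^{1/(1−s)} then s/(K−1)^{1−s} < 1. -/

import Mathlib

open Real

private lemma mvt_rpow {s m M : ℝ} (hs0 : 0 < s) (hs1 : s < 1) (hm : 0 < m) (hmM : m ≤ M) :
    M ^ s - m ^ s ≤ s * m ^ (s - 1) * (M - m) := by
  have ht : (0:ℝ) ≤ (M - m) / m := div_nonneg (by linarith) hm.le
  have hB := rpow_one_add_le_one_add_mul_self (s := (M - m) / m) (by linarith) hs0.le hs1.le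
  have h1 : 1 + (M - m) / m = M / m := by field_simp; ring
  rw [h1] at hB
  have hMm : 0 < M := lt_of_lt_of_le hm hmM
  have h2 : (M / m) ^ s = M ^ s / m ^ s := Real.div_rpow hMm.le hm.le s
  rw [h2] at hB
  have hms : (0:ℝ) < m ^ s := Real.rpow_pos_of_pos hm s
  have h3 : M ^ s ≤ (1 + s * ((M - m) / m)) * m ^ s := by
    rw [div_le_iff₀ hms] at hB; exact hB
  have h4 : m ^ (s - 1) = m ^ s / m := by
    rw [Real.rpow_sub hm, Real.rpow_one]
  calc M ^ s - m ^ s ≤ (1 + s * ((M - m) / m)) * m ^ s - m ^ s := by linarith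
    _ = s * (m ^ s / m) * (M - m) := by field_simp; ring
    _ = s * m ^ (s - 1) * (M - m) := by rw [h4]

/-- Inequality (A.10) (lem:scon): if `0 < s < 1`, `K > 1`, `x, y > 0` and `|x - y| < x / K`,
then `|x^s - y^s| ≤ (s / (K-1)^(1-s)) * |x - y|^s`; moreover the constant `s / (K-1)^(1-s)`
is `< 1` as soon as `K > 1 + s^(1/(1-s))`. -/
theorem rpow_abs_sub_le_of_abs_sub_lt
    (s K x y : ℝ) (hs0 : 0 < s) (hs1 : s < 1) (hK : 1 < K)
    (hx : 0 < x) (hy : 0 < y) (hxy : |x - y| < x / K) :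
    |x ^ s - y ^ s| ≤ s / (K - 1) ^ (1 - s) * |x - y| ^ s ∧
      (1 + s ^ (1 / (1 - s)) < K → s / (K - 1) ^ (1 - s) < 1) := by
  have hK1 : (0:ℝ) < K - 1 := by linarith
  have hKs : (0:ℝ) < (K - 1) ^ (1 - s) := Real.rpow_pos_of_pos hK1 _
  constructor
  · rcases eq_or_ne x y with rfl | hne
    · simp [abs_nonneg, Real.rpow_natCast]
      positivity
    · set d := |x - y| with hd
      have hd0 : 0 < d := abs_pos.mpr (sub_ne_zero.mpr hne)
      set m := min x y with hm
      set M := max x y with hM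
      have hm0 : 0 < m := lt_min hx hy
      have hmM : m ≤ M := min_le_max
      -- m > (K-1) * d
      have hmd : (K - 1) * d < m := by
        have h1 : x - d ≤ m := by
          rcases abs_sub_le_iff.mp (le_refl d) with ⟨h2, h3⟩
          simp only [hm, le_min_iff]; constructor <;> linarith
        have h2 : d < x / K := hxy
        have : (K - 1) * d < (K - 1) * (x / K) := by
          exact mul_lt_mul_of_pos_left h2 hK1
        have h4 : (K - 1) * (x / K) = x - x / K := by field_simp
        nlinarith
      have hMm : M - m = d := by
        rcases le_total x y with h | h
        · rw [hm, hM, min_eq_left h, max_eq_right h, hd, abs_sub_comm, abs_of_nonneg (by linarith)]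
        · rw [hm, hM, min_eq_right h, max_eq_left h, hd, abs_of_nonneg (by linarith)]
      have habs : |x ^ s - y ^ s| = M ^ s - m ^ s := by
        rcases le_total x y with h | h
        · rw [hm, hM, min_eq_left h, max_eq_right h, abs_sub_comm,
            abs_of_nonneg (sub_nonneg.mpr (Real.rpow_le_rpow hx.le h hs0.le))]
        · rw [hm, hM, min_eq_right h, max_eq_left h,
            abs_of_nonneg (sub_nonneg.mpr (Real.rpow_le_rpow hy.le h hs0.le))]
      rw [habs]
      have h5 := mvt_rpow hs0 hs1 hm0 hmM
      rw [hMm] at h5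
      -- m^(s-1) ≤ ((K-1)*d)^(s-1)
      have h6 : m ^ (s - 1) ≤ ((K - 1) * d) ^ (s - 1) := by
        exact Real.rpow_le_rpow_of_nonpos (by positivity) hmd.le (by linarith)
      have h7 : ((K - 1) * d) ^ (s - 1) = (K - 1) ^ (s - 1) * d ^ (s - 1) :=
        Real.mul_rpow hK1.le hd0.le
      have h8 : (K - 1) ^ (s - 1) = 1 / (K - 1) ^ (1 - s) := by
        rw [show s - 1 = -(1 - s) by ring, Real.rpow_neg hK1.le, one_div]
      have h9 : d ^ (s - 1) * d = d ^ s := by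
        nth_rewrite 2 [← Real.rpow_one d]
        rw [← Real.rpow_add hd0]; ring_nf
      calc M ^ s - m ^ s ≤ s * m ^ (s - 1) * d := h5
        _ ≤ s * ((K - 1) ^ (s - 1) * d ^ (s - 1)) * d := by
            rw [← h7]
            exact mul_le_mul_of_nonneg_right (mul_le_mul_of_nonneg_left h6 hs0.le) hd0.le
        _ = s / (K - 1) ^ (1 - s) * d ^ s := by
            rw [h8, ← h9]; ring
  · intro hKs'
    have h1 : s ^ (1 / (1 - s)) < K - 1 := by linarith
    have hsp : (0:ℝ) < s ^ (1 / (1 - s)) := Real.rpow_pos_of_pos hs0 _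
    have h2 : (s ^ (1 / (1 - s))) ^ (1 - s) < (K - 1) ^ (1 - s) :=
      Real.rpow_lt_rpow hsp.le h1 (by linarith)
    have h3 : (s ^ (1 / (1 - s))) ^ (1 - s) = s := by
      rw [← Real.rpow_mul hs0.le, one_div, inv_mul_cancel₀ (by linarith), Real.rpow_one]
    rw [h3] at h2
    rw [div_lt_one hKs]
    exact h2
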